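/- Let b > 0 and y_M > 0, and let α : [0, y_M] → ℝ be differentiable with α(0) = 0 and (b/2)·y ≤ α′(y) ≤ (3b/2)·y for all y ∈ [0, y_M]. Then α is a strictly increasing bijection from [0, y_M] onto [0, α(y_M)], and its inverse β = α⁻¹ satisfies, for every X ∈ (0, α(y_M)], 0 < β′(X) ≤ √(3/(b·X)). -/

import Mathlib

open Set Real Filter Topology

theorem stmt_14 (b yM : ℝ) (hb : 0 < b) (hyM : 0 < yM)
    (α α' : ℝ → ℝ) (hα0 : α 0 = 0)
    (hderiv : ∀ y ∈ Icc (0:ℝ) yM, HasDerivWithinAt α (α' y) (Icc (0:ℝ) yM) y)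
    (hlow : ∀ y ∈ Icc (0:ℝ) yM, b / 2 * y ≤ α' y)
    (hhigh : ∀ y ∈ Icc (0:ℝ) yM, α' y ≤ 3 * b / 2 * y) :
    StrictMonoOn α (Icc 0 yM) ∧
    Set.BijOn α (Icc 0 yM) (Icc 0 (α yM)) ∧
    ∃ β : ℝ → ℝ,
      (∀ y ∈ Icc (0:ℝ) yM, β (α y) = y) ∧
      (∀ X ∈ Icc (0:ℝ) (α yM), α (β X) = X) ∧
      ∀ X ∈ Ioc (0:ℝ) (α yM), ∃ d : ℝ,
        HasDerivWithinAt β d (Icc (0:ℝ) (α yM)) X ∧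
        0 < d ∧ d ≤ Real.sqrt (3 / (b * X)) := by
  have hcont : ContinuousOn α (Icc 0 yM) := fun y hy => (hderiv y hy).continuousWithinAt
  have hderivAt : ∀ x ∈ Ioo (0:ℝ) yM, HasDerivAt α (α' x) x := fun x hx =>
    (hderiv x (Ioo_subset_Icc_self hx)).hasDerivAt (Icc_mem_nhds hx.1 hx.2)
  -- strict monotonicity
  have hmono : StrictMonoOn α (Icc 0 yM) := by
    apply strictMonoOn_of_deriv_pos (convex_Icc _ _) hcont
    intro x hx
    rw [interior_Icc] at hx
    rw [(hderivAt x hx).deriv]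
    have := hlow x ⟨hx.1.le, hx.2.le⟩
    nlinarith [hx.1]
  have hαyM : 0 < α yM := by
    have := hmono ⟨le_refl 0, hyM.le⟩ ⟨hyM.le, le_refl yM⟩ hyM
    rwa [hα0] at this
  -- bijectivity
  have hmaps : MapsTo α (Icc 0 yM) (Icc 0 (α yM)) := by
    intro y hy
    constructor
    · have := hmono.monotoneOn ⟨le_refl 0, hyM.le⟩ hy hy.1
      rwa [hα0] at this
    · exact hmono.monotoneOn hy ⟨hyM.le, le_refl yM⟩ hy.2
  have hsurj : SurjOn α (Icc 0 yM) (Icc 0 (α yM)) := by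
    have := intermediate_value_Icc hyM.le hcont
    rwa [hα0] at this
  have hbij : Set.BijOn α (Icc 0 yM) (Icc 0 (α yM)) := ⟨hmaps, hmono.injOn, hsurj⟩
  refine ⟨hmono, hbij, ?_⟩
  -- the inverse function
  set β : ℝ → ℝ := Function.invFunOn α (Icc 0 yM) with hβdef
  have hleft : ∀ y ∈ Icc (0:ℝ) yM, β (α y) = y := fun y hy =>
    hmono.injOn.leftInvOn_invFunOn hy
  have hright : ∀ X ∈ Icc (0:ℝ) (α yM), α (β X) = X := fun X hX =>
    hsurj.rightInvOn_invFunOn hX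
  have hβmem : ∀ X ∈ Icc (0:ℝ) (α yM), β X ∈ Icc (0:ℝ) yM := fun X hX =>
    Function.invFunOn_mem (hsurj hX)
  have hβbij : Set.BijOn β (Icc 0 (α yM)) (Icc 0 yM) :=
    Set.BijOn.symm ⟨fun X hX => hright X hX, fun y hy => hleft y hy⟩ hbij
  have hβmono : StrictMonoOn β (Icc 0 (α yM)) := by
    intro X1 h1 X2 h2 hlt
    by_contra h
    push_neg at h
    have : X2 ≤ X1 := by
      have := hmono.monotoneOn (hβmem X2 h2) (hβmem X1 h1) h
      rwa [hright X1 h1, hright X2 h2] at this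
    linarith
  refine ⟨β, hleft, hright, ?_⟩
  -- upper bound for α : α y ≤ 3b/4 y²
  have hupper : ∀ y ∈ Icc (0:ℝ) yM, α y ≤ 3 * b / 4 * y ^ 2 := by
    intro y hy
    set g : ℝ → ℝ := fun t => 3 * b / 4 * t ^ 2 - α t with hg
    have hgd : ∀ x ∈ Ioo (0:ℝ) yM, HasDerivAt g (3 * b / 4 * (2 * x) - α' x) x := by
      intro x hx
      have h1 : HasDerivAt (fun t : ℝ => 3 * b / 4 * t ^ 2) (3 * b / 4 * (2 * x)) x := by
        simpa using ((hasDerivAt_pow 2 x).const_mul (3 * b / 4))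
      exact h1.sub (hderivAt x hx)
    have hgm : MonotoneOn g (Icc 0 yM) := by
      apply monotoneOn_of_deriv_nonneg (convex_Icc _ _)
      · exact (continuousOn_const.mul (continuousOn_pow 2)).sub hcont
      · intro x hx
        rw [interior_Icc] at hx
        exact (hgd x hx).differentiableAt.differentiableWithinAt
      · intro x hx
        rw [interior_Icc] at hx
        rw [(hgd x hx).deriv]
        have := hhigh x ⟨hx.1.le, hx.2.le⟩
        nlinarith [hx.1]
    have := hgm ⟨le_refl 0, hyM.le⟩ hy hy.1
    simp only [hg, hα0] at this
    nlinarith [this]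
  -- the derivative of β
  intro X hX
  have hXt : X ∈ Icc (0:ℝ) (α yM) := ⟨hX.1.le, hX.2⟩
  set y : ℝ := β X with hy
  have hys : y ∈ Icc (0:ℝ) yM := hβmem X hXt
  have hy0 : 0 < y := by
    rcases lt_or_eq_of_le hys.1 with h | h
    · exact h
    · exfalso
      have : α y = X := hright X hXt
      rw [← h, hα0] at this
      exact hX.1.ne this
  have hαy : α y = X := hright X hXt
  have hpos : 0 < α' y := lt_of_lt_of_le (by nlinarith) (hlow y hys)
  -- continuity of β within the interval at X
  have hctsW : ContinuousWithinAt β (Icc 0 (α yM)) X := by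
    rcases lt_or_eq_of_le hX.2 with hlt | heq
    · have hyM' : y < yM := by
        rcases lt_or_eq_of_le hys.2 with h | h
        · exact h
        · exfalso
          rw [← hαy, h] at hlt
          exact lt_irrefl _ hlt
      have himg : β '' Icc 0 (α yM) ∈ 𝓝 (β X) := by
        rw [hβbij.image_eq]
        exact Icc_mem_nhds hy0 hyM'
      exact (hβmono.continuousAt_of_image_mem_nhds
        (Icc_mem_nhds hX.1 hlt) himg).continuousWithinAt
    · have hβX : β X = yM := by rw [heq]; exact hleft yM ⟨hyM.le, le_refl yM⟩
      have himg : β '' Icc 0 (α yM) ∈ 𝓝[≤] β X := by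
        rw [hβbij.image_eq, hβX]
        exact Icc_mem_nhdsLE hyM
      have := hβmono.continuousWithinAt_left_of_image_mem_nhdsWithin
        (by rw [heq]; exact Icc_mem_nhdsLE hαyM) himg
      exact this.mono (by rw [heq]; exact Icc_subset_Iic_self)
  -- the derivative
  refine ⟨(α' y)⁻¹, ?_, inv_pos.2 hpos, ?_⟩
  · rw [hasDerivWithinAt_iff_tendsto_slope]
    have hαslope : Tendsto (slope α y) (𝓝[Icc 0 yM \ {y}] y) (𝓝 (α' y)) :=
      hasDerivWithinAt_iff_tendsto_slope.1 (hderiv y hys)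
    have hβtendsto : Tendsto β (𝓝[Icc 0 (α yM) \ {X}] X) (𝓝[Icc 0 yM \ {y}] y) := by
      rw [tendsto_nhdsWithin_iff]
      constructor
      · exact hctsW.tendsto.mono_left (nhdsWithin_mono _ diff_subset)
      · filter_upwards [self_mem_nhdsWithin] with x hx
        refine ⟨hβmem x hx.1, fun h => hx.2 ?_⟩
        simp only [mem_singleton_iff] at h ⊢
        rw [← hright x hx.1, h, hαy]
    have hT : Tendsto (fun x => (slope α y (β x))⁻¹) (𝓝[Icc 0 (α yM) \ {X}] X)
        (𝓝 (α' y)⁻¹) := (hαslope.comp hβtendsto).inv₀ hpos.ne'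
    apply hT.congr'
    filter_upwards [self_mem_nhdsWithin] with x hx
    rw [slope_def_field, slope_def_field, inv_div, hright x hx.1, hαy]
  · have hbX : 0 < b * X := mul_pos hb hX.1
    have h1 : Real.sqrt (b * X / 3) ≤ α' y := by
      have hXle : X ≤ 3 * b / 4 * y ^ 2 := hαy ▸ hupper y hys
      have h2 : b * X / 3 ≤ (α' y) ^ 2 := by
        nlinarith [hlow y hys, mul_le_mul_of_nonneg_left hXle hb.le,
          mul_nonneg (sub_nonneg.2 (hlow y hys)) (add_nonneg hpos.le (by positivity : (0:ℝ) ≤ b / 2 * y))]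
      calc Real.sqrt (b * X / 3) ≤ Real.sqrt ((α' y) ^ 2) := Real.sqrt_le_sqrt h2
        _ = α' y := by rw [Real.sqrt_sq hpos.le]
    have h2 : Real.sqrt (3 / (b * X)) = (Real.sqrt (b * X / 3))⁻¹ := by
      rw [← Real.sqrt_inv, inv_div]
    rw [h2]
    exact inv_anti₀ (Real.sqrt_pos.2 (by positivity)) h1
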